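/- Let A be a real symmetric matrix with eigendecomposition A = UΣUᵀ where U is orthogonal and Σ diagonal. Then the matrix UΣ₊Uᵀ, where (Σ₊)ᵢᵢ = max(Σᵢᵢ, 0), is the unique minimizer of ‖A − S‖_F over all symmetric positive semidefinite matrices S; i.e., it is the projection of A onto the positive semidefinite cone in Frobenius norm. -/

import Mathlib

open Matrix

private lemma maxsq_le (s t : ℝ) (ht : 0 ≤ t) : (s - max s 0)^2 ≤ (s - t)^2 := by
  rcases le_or_gt 0 s with h | h
  · rw [max_eq_left h]; simpa using sq_nonneg (s - t)
  · rw [max_eq_right h.le]; nlinarith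

private lemma maxsq_eq (s t : ℝ) (ht : 0 ≤ t) (h : (s - t)^2 = (s - max s 0)^2) :
    t = max s 0 := by
  rcases le_or_gt 0 s with hs | hs
  · rw [max_eq_left hs] at h ⊢
    have h0 : (s - t)^2 = 0 := by rw [h]; ring
    have := pow_eq_zero_iff (n := 2) (by norm_num) |>.mp h0
    linarith
  · rw [max_eq_right hs.le] at h ⊢
    have : t ≤ 0 := by nlinarith
    linarith

private lemma frob_trace {n : ℕ} (M : Matrix (Fin n) (Fin n) ℝ) :
    ∑ i, ∑ j, (M i j)^2 = (Mᵀ * M).trace := by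
  rw [Matrix.trace]
  simp only [Matrix.diag, Matrix.mul_apply, Matrix.transpose_apply]
  rw [Finset.sum_comm]
  simp [sq]

private lemma core {n : ℕ} (Sig T : Matrix (Fin n) (Fin n) ℝ) (hSig : Sig.IsDiag)
    (hdiag : ∀ i, 0 ≤ T i i) :
    (∑ i, ∑ j, ((Sig - Matrix.diagonal fun k => max (Sig k k) 0) i j)^2
      ≤ ∑ i, ∑ j, ((Sig - T) i j)^2) ∧
    (∑ i, ∑ j, ((Sig - T) i j)^2 =
      ∑ i, ∑ j, ((Sig - Matrix.diagonal fun k => max (Sig k k) 0) i j)^2 →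
      T = Matrix.diagonal fun k => max (Sig k k) 0) := by
  set D : Matrix (Fin n) (Fin n) ℝ := Matrix.diagonal fun k => max (Sig k k) 0 with hD
  have lhs_eq : ∑ i, ∑ j, ((Sig - D) i j)^2 = ∑ i, (Sig i i - max (Sig i i) 0)^2 := by
    refine Finset.sum_congr rfl fun i _ => ?_
    rw [Fintype.sum_eq_single i]
    · simp [hD, Matrix.diagonal]
    · intro j hj
      have h1 : Sig i j = 0 := hSig (Ne.symm hj)
      have h2 : D i j = 0 := Matrix.diagonal_apply_ne _ (Ne.symm hj)
      simp [h1, h2]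
  have hle1 : ∀ i, (Sig i i - max (Sig i i) 0)^2 ≤ ((Sig - T) i i)^2 := by
    intro i
    simpa using maxsq_le (Sig i i) (T i i) (hdiag i)
  have hle2 : ∀ i, ((Sig - T) i i)^2 ≤ ∑ j, ((Sig - T) i j)^2 :=
    fun i => Finset.single_le_sum (f := fun j => ((Sig - T) i j)^2) (fun j _ => sq_nonneg _) (Finset.mem_univ i)
  constructor
  · rw [lhs_eq]
    exact Finset.sum_le_sum fun i _ => le_trans (hle1 i) (hle2 i)
  · intro heq
    rw [lhs_eq] at heq
    have hterm := (Finset.sum_eq_sum_iff_of_le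
        (fun (i : Fin n) (_ : i ∈ Finset.univ) => le_trans (hle1 i) (hle2 i))).mp heq.symm
    have key : ∀ i, T i i = max (Sig i i) 0 ∧ ∀ j, j ≠ i → T i j = 0 := by
      intro i
      have h1 := hterm i (Finset.mem_univ i)
      have hsplit : ((Sig - T) i i)^2 + ∑ j ∈ Finset.univ.erase i, ((Sig - T) i j)^2
          = ∑ j, ((Sig - T) i j)^2 :=
        Finset.add_sum_erase _ (fun j => ((Sig - T) i j)^2) (Finset.mem_univ i)
      have hrest_nonneg : 0 ≤ ∑ j ∈ Finset.univ.erase i, ((Sig - T) i j)^2 :=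
        Finset.sum_nonneg fun j _ => sq_nonneg _
      have hdd : ((Sig - T) i i)^2 = (Sig i i - max (Sig i i) 0)^2 := by
        have := hle1 i
        linarith
      have hrest : ∑ j ∈ Finset.univ.erase i, ((Sig - T) i j)^2 = 0 := by linarith
      constructor
      · have : (Sig i i - T i i)^2 = (Sig i i - max (Sig i i) 0)^2 := by
          simpa using hdd
        exact maxsq_eq _ _ (hdiag i) this
      · intro j hj
        have hz : ((Sig - T) i j)^2 = 0 :=
          (Finset.sum_eq_zero_iff_of_nonneg fun k _ => sq_nonneg _).mp hrest j
            (Finset.mem_erase.mpr ⟨hj, Finset.mem_univ j⟩)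
        have hz2 : Sig i j - T i j = 0 := by simpa using hz
        have : Sig i j = 0 := hSig fun h => hj h.symm
        linarith
    ext i j
    rcases eq_or_ne i j with rfl | hij
    · simpa [hD, Matrix.diagonal] using (key i).1
    · rw [hD, Matrix.diagonal_apply_ne _ hij]
      exact (key i).2 j (Ne.symm hij)

theorem psd_projection_spectral {n : ℕ} (A U Sig : Matrix (Fin n) (Fin n) ℝ)
    (hAsym : Aᵀ = A) (hU : Uᵀ * U = 1) (hSig : Sig.IsDiag)
    (hdecomp : A = U * Sig * Uᵀ)
    (P : Matrix (Fin n) (Fin n) ℝ)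
    (hP : P = U * (Matrix.diagonal fun i => max (Sig i i) 0) * Uᵀ) :
    (∀ S : Matrix (Fin n) (Fin n) ℝ, S.PosSemidef →
        ∑ i, ∑ j, (A - P) i j ^ 2 ≤ ∑ i, ∑ j, (A - S) i j ^ 2) ∧
    (∀ S : Matrix (Fin n) (Fin n) ℝ, S.PosSemidef →
        ∑ i, ∑ j, (A - S) i j ^ 2 = ∑ i, ∑ j, (A - P) i j ^ 2 → S = P) := by
  have hUU : U * Uᵀ = 1 := mul_eq_one_comm.mp hU
  set D : Matrix (Fin n) (Fin n) ℝ := Matrix.diagonal fun i => max (Sig i i) 0 with hD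
  have conj : ∀ M : Matrix (Fin n) (Fin n) ℝ, Uᵀ * (U * M * Uᵀ) * U = M := by
    intro M
    calc Uᵀ * (U * M * Uᵀ) * U = (Uᵀ * U) * M * (Uᵀ * U) := by
          simp only [Matrix.mul_assoc]
      _ = M := by rw [hU, Matrix.one_mul, Matrix.mul_one]
  have inv : ∀ M : Matrix (Fin n) (Fin n) ℝ,
      ∑ i, ∑ j, (M i j)^2 = ∑ i, ∑ j, ((Uᵀ * M * U) i j)^2 := by
    intro M
    rw [frob_trace, frob_trace]
    have h1 : (Uᵀ * M * U)ᵀ * (Uᵀ * M * U) = Uᵀ * Mᵀ * (U * Uᵀ) * (M * U) := by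
      rw [Matrix.transpose_mul, Matrix.transpose_mul, Matrix.transpose_transpose]
      simp only [Matrix.mul_assoc]
    rw [h1, hUU, Matrix.mul_one]
    rw [show Uᵀ * Mᵀ * (M * U) = Uᵀ * (Mᵀ * M * U) by simp only [Matrix.mul_assoc]]
    rw [Matrix.trace_mul_comm Uᵀ (Mᵀ * M * U)]
    rw [show Mᵀ * M * U * Uᵀ = Mᵀ * M * (U * Uᵀ) by simp only [Matrix.mul_assoc]]
    rw [hUU, Matrix.mul_one]
  have hAPd : Uᵀ * (A - P) * U = Sig - D := by
    rw [Matrix.mul_sub, Matrix.sub_mul, hdecomp, hP, conj, conj]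
  have hASd : ∀ S : Matrix (Fin n) (Fin n) ℝ, Uᵀ * (A - S) * U = Sig - Uᵀ * S * U := by
    intro S
    rw [Matrix.mul_sub, Matrix.sub_mul, hdecomp, conj]
  have hTdiag : ∀ S : Matrix (Fin n) (Fin n) ℝ, S.PosSemidef → ∀ i, 0 ≤ (Uᵀ * S * U) i i := by
    intro S hS i
    have hT : (Uᵀ * S * U).PosSemidef := by
      have := hS.conjTranspose_mul_mul_same U
      simpa using this
    have := hT.diag_nonneg (i := i)
    simpa [Matrix.mulVec, dotProduct, Pi.single_apply] using this
  constructor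
  · intro S hS
    have hc := (core Sig (Uᵀ * S * U) hSig (hTdiag S hS)).1
    calc ∑ i, ∑ j, (A - P) i j ^ 2 = ∑ i, ∑ j, ((Uᵀ * (A - P) * U) i j)^2 := inv _
      _ = ∑ i, ∑ j, ((Sig - D) i j)^2 := by rw [hAPd]
      _ ≤ ∑ i, ∑ j, ((Sig - Uᵀ * S * U) i j)^2 := hc
      _ = ∑ i, ∑ j, ((Uᵀ * (A - S) * U) i j)^2 := by rw [hASd]
      _ = ∑ i, ∑ j, (A - S) i j ^ 2 := (inv _).symm
  · intro S hS heq
    have h1 : ∑ i, ∑ j, ((Sig - Uᵀ * S * U) i j)^2 = ∑ i, ∑ j, ((Sig - D) i j)^2 := by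
      calc ∑ i, ∑ j, ((Sig - Uᵀ * S * U) i j)^2
          = ∑ i, ∑ j, ((Uᵀ * (A - S) * U) i j)^2 := by rw [hASd]
        _ = ∑ i, ∑ j, (A - S) i j ^ 2 := (inv _).symm
        _ = ∑ i, ∑ j, (A - P) i j ^ 2 := heq
        _ = ∑ i, ∑ j, ((Uᵀ * (A - P) * U) i j)^2 := inv _
        _ = ∑ i, ∑ j, ((Sig - D) i j)^2 := by rw [hAPd]
    have hTD : Uᵀ * S * U = D := (core Sig (Uᵀ * S * U) hSig (hTdiag S hS)).2 h1
    have : U * (Uᵀ * S * U) * Uᵀ = S := by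
      calc U * (Uᵀ * S * U) * Uᵀ = (U * Uᵀ) * S * (U * Uᵀ) := by
            simp only [Matrix.mul_assoc]
        _ = S := by rw [hUU, Matrix.one_mul, Matrix.mul_one]
    rw [← this, hTD, hP]
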